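/- Let n ≥ 1, let Ω ⊂ ℝⁿ be open and bounded, and let s₀ ∈ (0,1/2). Assume there exist c* > 0 and η > 2s₀ such that 𝓛ⁿ(D_r^Ω(Ω^c)) ≤ c* · min{r^η, 1} for all r ∈ [0,1]. Then ∫₀^∞ t^{−(1+s₀)} ∫_Ω ∫_{Ω^c} p_t(x,y) dy dx dt < ∞. In particular, for every measurable E ⊂ ℝⁿ, L_{s₀}(E ∩ Ω, E ∩ Ω^c) < ∞. -/

import Mathlib

open MeasureTheory Real Filter Topology Set
open scoped ENNReal

/-- The classical heat kernel on `ℝⁿ`. -/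
noncomputable def heatKernel (n : ℕ) (t : ℝ) (x y : EuclideanSpace ℝ (Fin n)) : ℝ :=
  (4 * π * t) ^ (-(n : ℝ) / 2) * Real.exp (-‖x - y‖ ^ 2 / (4 * t))

/-- `L_s(A,B) = ∫₀^∞ t^{-(1+s)} ∫_A ∫_B p_t(x,y) dy dx dt`. -/
noncomputable def Lfun (n : ℕ) (s : ℝ) (A B : Set (EuclideanSpace ℝ (Fin n))) : ℝ≥0∞ :=
  ∫⁻ t in Set.Ioi (0:ℝ), ENNReal.ofReal (t ^ (-(1 + s))) *
    ∫⁻ x in A, ∫⁻ y in B, ENNReal.ofReal (heatKernel n t x y)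

/-- The inner collar `D_r^Ω(Ωᶜ) = {x ∈ Ω : dist(x, Ωᶜ) ≤ r}`. -/
def innerCollar (n : ℕ) (Ω : Set (EuclideanSpace ℝ (Fin n))) (r : ℝ) :
    Set (EuclideanSpace ℝ (Fin n)) :=
  {x | x ∈ Ω ∧ Metric.infDist x Ωᶜ ≤ r}

section Aux

open Metric

lemma gauss_integrable (n : ℕ) {b : ℝ} (hb : 0 < b) :
    Integrable (fun v : EuclideanSpace ℝ (Fin n) => rexp (-b * ‖v‖ ^ 2)) := by
  have h := (GaussianFourier.integrable_cexp_neg_mul_sq_norm_add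
    (V := EuclideanSpace ℝ (Fin n)) (b := (b : ℂ)) (by simpa using hb) 0 0).norm
  refine h.congr (Eventually.of_forall fun v => ?_)
  simp only [Complex.norm_exp]
  norm_num
  left
  norm_cast

lemma gauss_lint (n : ℕ) {t : ℝ} (ht : 0 < t) (x : EuclideanSpace ℝ (Fin n)) :
    ∫⁻ y : EuclideanSpace ℝ (Fin n),
      ENNReal.ofReal ((4 * π * t) ^ (-(n : ℝ) / 2) * Real.exp (-‖x - y‖ ^ 2 / (8 * t))) =
      ENNReal.ofReal ((2:ℝ) ^ ((n : ℝ) / 2)) := by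
  have h8t : (0:ℝ) < 8 * t := by linarith
  have hb : (0:ℝ) < (8*t)⁻¹ := by positivity
  have h4 : (0:ℝ) < 4 * π * t := by positivity
  have step1 : ∀ y : EuclideanSpace ℝ (Fin n),
      ENNReal.ofReal ((4 * π * t) ^ (-(n : ℝ) / 2) * Real.exp (-‖x - y‖ ^ 2 / (8 * t)))
      = ENNReal.ofReal ((4 * π * t) ^ (-(n : ℝ) / 2)) *
        ENNReal.ofReal (rexp (-(8*t)⁻¹ * ‖y - x‖ ^ 2)) := by
    intro y
    rw [← ENNReal.ofReal_mul (by positivity)]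
    congr 2
    rw [norm_sub_rev]
    ring
  simp_rw [step1]
  rw [lintegral_const_mul' _ _ ENNReal.ofReal_ne_top]
  have shift : ∫⁻ y : EuclideanSpace ℝ (Fin n), ENNReal.ofReal (rexp (-(8*t)⁻¹ * ‖y - x‖ ^ 2))
      = ∫⁻ v : EuclideanSpace ℝ (Fin n), ENNReal.ofReal (rexp (-(8*t)⁻¹ * ‖v‖ ^ 2)) := by
    have := lintegral_add_right_eq_self
      (μ := (volume : Measure (EuclideanSpace ℝ (Fin n))))
      (fun v => ENNReal.ofReal (rexp (-(8*t)⁻¹ * ‖v‖ ^ 2))) (-x)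
    simpa [sub_eq_add_neg] using this
  rw [shift, ← ofReal_integral_eq_lintegral_ofReal (gauss_integrable n hb)
    (Eventually.of_forall fun v => (exp_nonneg _))]
  rw [GaussianFourier.integral_rexp_neg_mul_sq_norm hb]
  rw [← ENNReal.ofReal_mul (by positivity)]
  congr 1
  rw [finrank_euclideanSpace_fin]
  have : π / (8*t)⁻¹ = 8 * t * π := by field_simp
  rw [this]
  have e1 : (-(n:ℝ)/2) = -((n:ℝ)/2) := by ring
  rw [e1, Real.rpow_neg h4.le, inv_mul_eq_div, ← Real.div_rpow (by positivity) h4.le]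
  congr 1
  field_simp
  ring

lemma stepA (n : ℕ) {t : ℝ} (ht : 0 < t) (Ω : Set (EuclideanSpace ℝ (Fin n)))
    (x : EuclideanSpace ℝ (Fin n)) :
    ∫⁻ y in Ωᶜ, ENNReal.ofReal (heatKernel n t x y) ≤
      ENNReal.ofReal (rexp (-(infDist x Ωᶜ) ^ 2 / (8 * t))) *
        ENNReal.ofReal ((2:ℝ) ^ ((n:ℝ)/2)) := by
  rcases eq_empty_or_nonempty Ωᶜ with h | hne
  · simp [h]
  have h4 : (0:ℝ) < 4 * π * t := by positivity
  have key : ∀ y ∈ Ωᶜ, ENNReal.ofReal (heatKernel n t x y) ≤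
      ENNReal.ofReal (rexp (-(infDist x Ωᶜ) ^ 2 / (8 * t))) *
      ENNReal.ofReal ((4 * π * t) ^ (-(n : ℝ) / 2) * Real.exp (-‖x - y‖ ^ 2 / (8 * t))) := by
    intro y hy
    rw [← ENNReal.ofReal_mul (exp_nonneg _)]
    apply ENNReal.ofReal_le_ofReal
    rw [heatKernel]
    have hd : infDist x Ωᶜ ≤ ‖x - y‖ := by
      simpa [dist_eq_norm] using infDist_le_dist_of_mem hy
    have hd0 : 0 ≤ infDist x Ωᶜ := infDist_nonneg
    have hsq : (infDist x Ωᶜ) ^ 2 ≤ ‖x - y‖ ^ 2 := by nlinarith [norm_nonneg (x - y)]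
    have hexp : rexp (-‖x - y‖ ^ 2 / (4 * t)) ≤
        rexp (-(infDist x Ωᶜ) ^ 2 / (8 * t)) * rexp (-‖x - y‖ ^ 2 / (8 * t)) := by
      rw [← Real.exp_add]
      apply Real.exp_le_exp.2
      rw [← add_div, div_le_div_iff₀ (by positivity) (by positivity)]
      nlinarith
    calc (4 * π * t) ^ (-(n:ℝ)/2) * rexp (-‖x - y‖ ^ 2 / (4 * t))
        ≤ (4 * π * t) ^ (-(n:ℝ)/2) *
          (rexp (-(infDist x Ωᶜ) ^ 2 / (8 * t)) * rexp (-‖x - y‖ ^ 2 / (8 * t))) :=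
          mul_le_mul_of_nonneg_left hexp (Real.rpow_nonneg h4.le _)
      _ = _ := by ring
  calc ∫⁻ y in Ωᶜ, ENNReal.ofReal (heatKernel n t x y)
      ≤ ∫⁻ y in Ωᶜ, ENNReal.ofReal (rexp (-(infDist x Ωᶜ) ^ 2 / (8 * t))) *
        ENNReal.ofReal ((4 * π * t) ^ (-(n : ℝ) / 2) * Real.exp (-‖x - y‖ ^ 2 / (8 * t))) :=
        setLIntegral_mono_ae (by fun_prop) (Eventually.of_forall key)
    _ ≤ ∫⁻ y, ENNReal.ofReal (rexp (-(infDist x Ωᶜ) ^ 2 / (8 * t))) *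
        ENNReal.ofReal ((4 * π * t) ^ (-(n : ℝ) / 2) * Real.exp (-‖x - y‖ ^ 2 / (8 * t))) :=
        setLIntegral_le_lintegral _ _
    _ = _ := by
        rw [lintegral_const_mul' _ _ ENNReal.ofReal_ne_top, gauss_lint n ht x]

lemma stepB (n : ℕ) (Ω : Set (EuclideanSpace ℝ (Fin n))) (hΩo : IsOpen Ω)
    {t : ℝ} (ht : 0 < t) {η : ℝ} (hη0 : 0 < η) (hη1 : η ≤ 1)
    (K : ℝ≥0∞) (hK : K ≠ ⊤)
    (hbd : ∀ r : ℝ, 0 ≤ r → volume (innerCollar n Ω r) ≤ K * ENNReal.ofReal (min (r ^ η) 1)) :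
    ∫⁻ x in Ω, ENNReal.ofReal (rexp (-(infDist x Ωᶜ) ^ 2 / (8 * t))) ≤
      K * ENNReal.ofReal ((8 * t) ^ (η / 2)) *
        ∫⁻ l in Ioo (0:ℝ) 1, ENNReal.ofReal (l ^ (-(1:ℝ)/2)) := by
  have h8 : (0:ℝ) < 8 * t := by linarith
  have hf_m : Measurable (fun x : EuclideanSpace ℝ (Fin n) =>
      rexp (-(infDist x Ωᶜ) ^ 2 / (8 * t))) := by fun_prop
  rw [lintegral_eq_lintegral_meas_lt (volume.restrict Ω)
    (Eventually.of_forall fun x => exp_nonneg _) hf_m.aemeasurable]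
  have key : ∀ l ∈ Ioi (0:ℝ),
      (volume.restrict Ω) {a | l < rexp (-(infDist a Ωᶜ) ^ 2 / (8 * t))} ≤
      (Ioo (0:ℝ) 1).indicator
        (fun l => K * ENNReal.ofReal ((8 * t) ^ (η / 2) * l ^ (-(1:ℝ)/2))) l := by
    intro l hl
    rcases le_or_gt 1 l with h1 | h1
    · have : {a : EuclideanSpace ℝ (Fin n) | l < rexp (-(infDist a Ωᶜ) ^ 2 / (8 * t))} = ∅ := by
        ext a
        simp only [mem_setOf_eq, mem_empty_iff_false, iff_false, not_lt]
        refine le_trans (Real.exp_le_one_iff.2 ?_) h1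
        exact div_nonpos_of_nonpos_of_nonneg (neg_nonpos_of_nonneg (sq_nonneg _)) h8.le
      rw [this]
      simp
    · have hl0 : (0:ℝ) < l := hl
      rw [indicator_of_mem (Set.mem_Ioo.mpr ⟨hl0, h1⟩)]
      set r : ℝ := Real.sqrt (8 * t * Real.log (1/l)) with hr
      have h1l : 1 < 1/l := by rw [lt_div_iff₀ hl0]; linarith
      have hlog : 0 < Real.log (1/l) := Real.log_pos h1l
      have hr0 : 0 ≤ r := Real.sqrt_nonneg _
      have hsub : {a : EuclideanSpace ℝ (Fin n) | l < rexp (-(infDist a Ωᶜ) ^ 2 / (8 * t))} ∩ Ω ⊆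
          innerCollar n Ω r := by
        rintro a ⟨ha, haΩ⟩
        refine ⟨haΩ, ?_⟩
        have h2 : Real.log l < -(infDist a Ωᶜ) ^ 2 / (8 * t) := by
          have := Real.log_lt_log hl0 ha
          rwa [Real.log_exp] at this
        have h2' : Real.log l * (8 * t) < -(infDist a Ωᶜ) ^ 2 := (lt_div_iff₀ h8).1 h2
        have h3 : (infDist a Ωᶜ) ^ 2 ≤ 8 * t * Real.log (1/l) := by
          rw [one_div, Real.log_inv]
          nlinarith
        rw [hr]
        exact Real.le_sqrt_of_sq_le h3
      calc (volume.restrict Ω) {a | l < rexp (-(infDist a Ωᶜ) ^ 2 / (8 * t))}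
          = volume ({a | l < rexp (-(infDist a Ωᶜ) ^ 2 / (8 * t))} ∩ Ω) :=
            Measure.restrict_apply' hΩo.measurableSet
        _ ≤ volume (innerCollar n Ω r) := measure_mono hsub
        _ ≤ K * ENNReal.ofReal (min (r ^ η) 1) := hbd r hr0
        _ ≤ K * ENNReal.ofReal ((8 * t) ^ (η / 2) * l ^ (-(1:ℝ)/2)) := by
            refine mul_le_mul_right (ENNReal.ofReal_le_ofReal ?_) K
            calc min (r ^ η) 1 ≤ r ^ η := min_le_left _ _
              _ = (8 * t * Real.log (1/l)) ^ (η/2) := by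
                  rw [hr, Real.sqrt_eq_rpow, ← Real.rpow_mul (by positivity)]
                  congr 1
                  ring
              _ = (8*t) ^ (η/2) * (Real.log (1/l)) ^ (η/2) :=
                  Real.mul_rpow h8.le hlog.le
              _ ≤ (8*t) ^ (η/2) * l ^ (-(1:ℝ)/2) := by
                  refine mul_le_mul_of_nonneg_left ?_ (by positivity)
                  calc (Real.log (1/l)) ^ (η/2) ≤ (1/l) ^ (η/2) := by
                        apply Real.rpow_le_rpow hlog.le _ (by positivity)
                        have := Real.log_le_sub_one_of_pos (show (0:ℝ) < 1/l by positivity)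
                        linarith
                    _ ≤ (1/l) ^ ((1:ℝ)/2) := by
                        apply Real.rpow_le_rpow_of_exponent_le _ (by linarith)
                        exact h1l.le
                    _ = l ^ (-(1:ℝ)/2) := by
                        rw [one_div, Real.inv_rpow hl0.le, ← Real.rpow_neg hl0.le]
                        norm_num
  calc ∫⁻ l in Ioi (0:ℝ), (volume.restrict Ω) {a | l < rexp (-(infDist a Ωᶜ) ^ 2 / (8 * t))}
      ≤ ∫⁻ l in Ioi (0:ℝ), (Ioo (0:ℝ) 1).indicator
          (fun l => K * ENNReal.ofReal ((8 * t) ^ (η / 2) * l ^ (-(1:ℝ)/2))) l :=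
        setLIntegral_mono_ae (Measurable.indicator (by fun_prop) measurableSet_Ioo).aemeasurable
          (Eventually.of_forall key)
    _ = ∫⁻ l in Ioo (0:ℝ) 1, K * ENNReal.ofReal ((8 * t) ^ (η / 2) * l ^ (-(1:ℝ)/2)) := by
        rw [lintegral_indicator measurableSet_Ioo, Measure.restrict_restrict measurableSet_Ioo]
        congr 1
        rw [Set.Ioo_inter_Ioi]
        simp
    _ = K * ENNReal.ofReal ((8 * t) ^ (η / 2)) *
          ∫⁻ l in Ioo (0:ℝ) 1, ENNReal.ofReal (l ^ (-(1:ℝ)/2)) := by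
        simp_rw [ENNReal.ofReal_mul (by positivity : (0:ℝ) ≤ (8*t)^(η/2)), ← mul_assoc]
        rw [lintegral_const_mul' _ _ (by finiteness)]

lemma Lfun_mono (n : ℕ) (s : ℝ) {A A' B B' : Set (EuclideanSpace ℝ (Fin n))}
    (hA : A ⊆ A') (hB : B ⊆ B') : Lfun n s A B ≤ Lfun n s A' B' := by
  refine lintegral_mono fun t => mul_le_mul_right ?_ _
  calc ∫⁻ x in A, ∫⁻ y in B, ENNReal.ofReal (heatKernel n t x y)
      ≤ ∫⁻ x in A, ∫⁻ y in B', ENNReal.ofReal (heatKernel n t x y) :=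
        lintegral_mono fun x => lintegral_mono_set hB
    _ ≤ ∫⁻ x in A', ∫⁻ y in B', ENNReal.ofReal (heatKernel n t x y) :=
        lintegral_mono_set hA

set_option maxHeartbeats 2000000 in
lemma mainBound (n : ℕ) (Ω : Set (EuclideanSpace ℝ (Fin n)))
    (hΩo : IsOpen Ω) (hΩb : Bornology.IsBounded Ω)
    {s₀ : ℝ} (hs0 : 0 < s₀) {η : ℝ} (hη0 : 0 < η) (hη1 : η ≤ 1) (hηs : 2 * s₀ < η)
    (K : ℝ≥0∞) (hK : K ≠ ⊤)
    (hbd : ∀ r : ℝ, 0 ≤ r → volume (innerCollar n Ω r) ≤ K * ENNReal.ofReal (min (r ^ η) 1)) :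
    Lfun n s₀ Ω Ωᶜ < ⊤ := by
  set G : ℝ≥0∞ := ENNReal.ofReal ((2:ℝ) ^ ((n:ℝ)/2)) with hG
  set J : ℝ≥0∞ := ∫⁻ l in Ioo (0:ℝ) 1, ENNReal.ofReal (l ^ (-(1:ℝ)/2)) with hJdef
  have hV : volume Ω < ⊤ := hΩb.measure_lt_top (μ := volume)
  have hJ : J < ⊤ := by
    have hint : IntegrableOn (fun l : ℝ => l ^ (-(1:ℝ)/2)) (Ioo 0 1) := by
      rw [intervalIntegral.integrableOn_Ioo_rpow_iff one_pos]
      norm_num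
    exact hint.lintegral_lt_top
  have hJbd : ∀ t : ℝ, 0 < t →
      (∫⁻ x in Ω, ENNReal.ofReal (rexp (-(Metric.infDist x Ωᶜ) ^ 2 / (8 * t)))) ≤
        K * ENNReal.ofReal ((8 * t) ^ (η / 2)) * J :=
    fun t ht => stepB n Ω hΩo ht hη0 hη1 K hK hbd
  clear_value J
  clear hJdef
  -- pointwise bound on the double integral via stepA
  have hdouble : ∀ t : ℝ, 0 < t →
      (∫⁻ x in Ω, ∫⁻ y in Ωᶜ, ENNReal.ofReal (heatKernel n t x y)) ≤
      G * ∫⁻ x in Ω, ENNReal.ofReal (rexp (-(Metric.infDist x Ωᶜ) ^ 2 / (8 * t))) := by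
    intro t ht
    calc (∫⁻ x in Ω, ∫⁻ y in Ωᶜ, ENNReal.ofReal (heatKernel n t x y))
        ≤ ∫⁻ x in Ω, ENNReal.ofReal (rexp (-(Metric.infDist x Ωᶜ) ^ 2 / (8 * t))) * G :=
          lintegral_mono fun x => stepA n ht Ω x
      _ = _ := by
          rw [lintegral_mul_const' _ _ (by finiteness), mul_comm]
  have htriv : ∀ t : ℝ, 0 < t →
      (∫⁻ x in Ω, ENNReal.ofReal (rexp (-(Metric.infDist x Ωᶜ) ^ 2 / (8 * t)))) ≤ volume Ω := by
    intro t ht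
    calc (∫⁻ x in Ω, ENNReal.ofReal (rexp (-(Metric.infDist x Ωᶜ) ^ 2 / (8 * t))))
        ≤ ∫⁻ _ in Ω, 1 := by
          refine lintegral_mono fun x => ?_
          refine ENNReal.ofReal_le_one.2 (Real.exp_le_one_iff.2 ?_)
          have h8 : (0:ℝ) < 8 * t := by linarith
          exact div_nonpos_of_nonpos_of_nonneg (neg_nonpos_of_nonneg (sq_nonneg _)) h8.le
      _ = volume Ω := setLIntegral_one Ω
  -- split the time integral
  have hsplit : Lfun n s₀ Ω Ωᶜ =
      (∫⁻ t in Ioc (0:ℝ) 1, ENNReal.ofReal (t ^ (-(1 + s₀))) *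
        ∫⁻ x in Ω, ∫⁻ y in Ωᶜ, ENNReal.ofReal (heatKernel n t x y)) +
      ∫⁻ t in Ioi (1:ℝ), ENNReal.ofReal (t ^ (-(1 + s₀))) *
        ∫⁻ x in Ω, ∫⁻ y in Ωᶜ, ENNReal.ofReal (heatKernel n t x y) := by
    rw [Lfun, ← Set.Ioc_union_Ioi_eq_Ioi (zero_le_one (α := ℝ)),
      lintegral_union measurableSet_Ioi (Set.Ioc_disjoint_Ioi le_rfl)]
  rw [hsplit]
  have hpart2 : (∫⁻ t in Ioi (1:ℝ), ENNReal.ofReal (t ^ (-(1 + s₀))) *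
      ∫⁻ x in Ω, ∫⁻ y in Ωᶜ, ENNReal.ofReal (heatKernel n t x y)) < ⊤ := by
    have hbd2 : ∀ t ∈ Ioi (1:ℝ), ENNReal.ofReal (t ^ (-(1 + s₀))) *
        (∫⁻ x in Ω, ∫⁻ y in Ωᶜ, ENNReal.ofReal (heatKernel n t x y)) ≤
        G * volume Ω * ENNReal.ofReal (t ^ (-(1 + s₀))) := by
      intro t ht
      have ht0 : (0:ℝ) < t := lt_trans one_pos ht
      calc ENNReal.ofReal (t ^ (-(1 + s₀))) *
          (∫⁻ x in Ω, ∫⁻ y in Ωᶜ, ENNReal.ofReal (heatKernel n t x y))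
          ≤ ENNReal.ofReal (t ^ (-(1 + s₀))) * (G * volume Ω) := by
            refine mul_le_mul_right ((hdouble t ht0).trans ?_) _
            exact mul_le_mul_right (htriv t ht0) G
        _ = G * volume Ω * ENNReal.ofReal (t ^ (-(1 + s₀))) := by ring
    calc (∫⁻ t in Ioi (1:ℝ), ENNReal.ofReal (t ^ (-(1 + s₀))) *
        ∫⁻ x in Ω, ∫⁻ y in Ωᶜ, ENNReal.ofReal (heatKernel n t x y))
        ≤ ∫⁻ t in Ioi (1:ℝ), G * volume Ω * ENNReal.ofReal (t ^ (-(1 + s₀))) :=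
          setLIntegral_mono_ae (by fun_prop) (Eventually.of_forall hbd2)
      _ = G * volume Ω * ∫⁻ t in Ioi (1:ℝ), ENNReal.ofReal (t ^ (-(1 + s₀))) :=
          lintegral_const_mul' _ _ (by finiteness)
      _ < ⊤ := by
          have hint : IntegrableOn (fun t : ℝ => t ^ (-(1 + s₀))) (Ioi 1) :=
            integrableOn_Ioi_rpow_of_lt (by linarith) one_pos
          exact ENNReal.mul_lt_top (by finiteness) hint.lintegral_lt_top
  have hpart1 : (∫⁻ t in Ioc (0:ℝ) 1, ENNReal.ofReal (t ^ (-(1 + s₀))) *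
      ∫⁻ x in Ω, ∫⁻ y in Ωᶜ, ENNReal.ofReal (heatKernel n t x y)) < ⊤ := by
    set C : ℝ≥0∞ := G * K * J * ENNReal.ofReal ((8:ℝ) ^ (η/2)) with hC
    have hC_ne : C ≠ ⊤ := by
      rw [hC]
      exact ENNReal.mul_ne_top (ENNReal.mul_ne_top (ENNReal.mul_ne_top
        ENNReal.ofReal_ne_top hK) hJ.ne) ENNReal.ofReal_ne_top
    have hbd1 : ∀ t ∈ Ioc (0:ℝ) 1, ENNReal.ofReal (t ^ (-(1 + s₀))) *
        (∫⁻ x in Ω, ∫⁻ y in Ωᶜ, ENNReal.ofReal (heatKernel n t x y)) ≤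
        C * ENNReal.ofReal (t ^ (η/2 - (1 + s₀))) := by
      intro t ht
      have ht0 : (0:ℝ) < t := ht.1
      have h1 : ENNReal.ofReal (t ^ (-(1 + s₀))) *
          (∫⁻ x in Ω, ∫⁻ y in Ωᶜ, ENNReal.ofReal (heatKernel n t x y)) ≤
          ENNReal.ofReal (t ^ (-(1 + s₀))) *
            (G * (K * ENNReal.ofReal ((8 * t) ^ (η / 2)) * J)) := by
        refine mul_le_mul_right ((hdouble t ht0).trans (mul_le_mul_right ?_ G)) _
        exact hJbd t ht0
      refine h1.trans (le_of_eq ?_)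
      have e8 : ((8:ℝ) * t) ^ (η/2) = (8:ℝ) ^ (η/2) * t ^ (η/2) :=
        Real.mul_rpow (by norm_num) ht0.le
      have et : t ^ (-(1 + s₀)) * t ^ (η/2) = t ^ (η/2 - (1 + s₀)) := by
        rw [← Real.rpow_add ht0]
        congr 1
        ring
      rw [e8, ENNReal.ofReal_mul (by positivity), hC]
      calc ENNReal.ofReal (t ^ (-(1 + s₀))) *
            (G * (K * (ENNReal.ofReal ((8:ℝ) ^ (η/2)) * ENNReal.ofReal (t ^ (η/2))) * J))
          = G * K * J * ENNReal.ofReal ((8:ℝ) ^ (η/2)) *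
            (ENNReal.ofReal (t ^ (-(1 + s₀))) * ENNReal.ofReal (t ^ (η/2))) := by ring
        _ = G * K * J * ENNReal.ofReal ((8:ℝ) ^ (η/2)) *
            ENNReal.ofReal (t ^ (η/2 - (1 + s₀))) := by
            rw [← ENNReal.ofReal_mul (by positivity), et]
    calc (∫⁻ t in Ioc (0:ℝ) 1, ENNReal.ofReal (t ^ (-(1 + s₀))) *
        ∫⁻ x in Ω, ∫⁻ y in Ωᶜ, ENNReal.ofReal (heatKernel n t x y))
        ≤ ∫⁻ t in Ioc (0:ℝ) 1, C * ENNReal.ofReal (t ^ (η/2 - (1 + s₀))) :=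
          setLIntegral_mono_ae (by fun_prop) (Eventually.of_forall hbd1)
      _ = C * ∫⁻ t in Ioc (0:ℝ) 1, ENNReal.ofReal (t ^ (η/2 - (1 + s₀))) :=
          lintegral_const_mul' _ _ hC_ne
      _ < ⊤ := by
          have heq : (∫⁻ t in Ioo (0:ℝ) 1, ENNReal.ofReal (t ^ (η/2 - (1 + s₀)))) =
              ∫⁻ t in Ioc (0:ℝ) 1, ENNReal.ofReal (t ^ (η/2 - (1 + s₀))) :=
            setLIntegral_congr (μ := (volume : Measure ℝ)) Ioo_ae_eq_Ioc
          have hint : IntegrableOn (fun t : ℝ => t ^ (η/2 - (1 + s₀))) (Ioo 0 1) := by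
            rw [intervalIntegral.integrableOn_Ioo_rpow_iff one_pos]
            linarith
          rw [← heq]
          exact ENNReal.mul_lt_top hC_ne.lt_top hint.lintegral_lt_top
  exact ENNReal.add_lt_top.2 ⟨hpart1, hpart2⟩

end Aux

/-- key finiteness estimate: if `Ω ⊂ ℝⁿ` is open and bounded, `s₀ ∈ (0,1/2)`,
and `𝓛ⁿ(D_r^Ω(Ωᶜ)) ≤ c* min{r^η, 1}` on `[0,1]` for some `c* > 0`, `η > 2s₀`, then
`∫₀^∞ t^{-(1+s₀)} ∫_Ω ∫_{Ωᶜ} p_t(x,y) dy dx dt < ∞`; in particular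
`L_{s₀}(E∩Ω, E∩Ωᶜ) < ∞` for every measurable `E`. -/
theorem statement19 (n : ℕ) (hn : 1 ≤ n) (Ω : Set (EuclideanSpace ℝ (Fin n)))
    (hΩo : IsOpen Ω) (hΩb : Bornology.IsBounded Ω)
    (s₀ : ℝ) (hs₀ : s₀ ∈ Set.Ioo (0:ℝ) (1/2))
    (c : ℝ) (hc : 0 < c) (η : ℝ) (hη : 2 * s₀ < η)
    (hbd : ∀ r ∈ Set.Icc (0:ℝ) 1,
      volume (innerCollar n Ω r) ≤ ENNReal.ofReal (c * min (r ^ η) 1)) :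
    Lfun n s₀ Ω Ωᶜ < ⊤ ∧
      ∀ E : Set (EuclideanSpace ℝ (Fin n)), MeasurableSet E →
        Lfun n s₀ (E ∩ Ω) (E ∩ Ωᶜ) < ⊤ := by
  obtain ⟨hs0, hs12⟩ := hs₀
  set η' : ℝ := min η 1 with hη'
  have hη'0 : 0 < η' := lt_min (by linarith) one_pos
  have hη'1 : η' ≤ 1 := min_le_right _ _
  have hη's : 2 * s₀ < η' := lt_min hη (by linarith)
  set K : ℝ≥0∞ := max (ENNReal.ofReal c) (volume Ω) with hKdef
  have hK : K ≠ ⊤ := by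
    have hV : volume Ω < ⊤ := hΩb.measure_lt_top (μ := volume)
    simp only [hKdef, ne_eq, max_eq_top, ENNReal.ofReal_ne_top, false_or]
    exact hV.ne
  have hbd' : ∀ r : ℝ, 0 ≤ r →
      volume (innerCollar n Ω r) ≤ K * ENNReal.ofReal (min (r ^ η') 1) := by
    intro r hr0
    rcases le_or_gt r 1 with hr1 | hr1
    · have hmin : min (r ^ η) 1 ≤ min (r ^ η') 1 := by
        refine min_le_min ?_ le_rfl
        rcases eq_or_lt_of_le hr0 with h0 | h0
        · rw [← h0, Real.zero_rpow hη'0.ne', Real.zero_rpow (show η ≠ 0 by linarith)]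
        · exact Real.rpow_le_rpow_of_exponent_ge h0 hr1 (min_le_left _ _)
      calc volume (innerCollar n Ω r) ≤ ENNReal.ofReal (c * min (r ^ η) 1) :=
            hbd r ⟨hr0, hr1⟩
        _ = ENNReal.ofReal c * ENNReal.ofReal (min (r ^ η) 1) :=
            ENNReal.ofReal_mul hc.le
        _ ≤ K * ENNReal.ofReal (min (r ^ η') 1) :=
            mul_le_mul' (le_max_left _ _) (ENNReal.ofReal_le_ofReal hmin)
    · have hmin : min (r ^ η') 1 = 1 := by
        rw [min_eq_right]
        exact Real.one_le_rpow hr1.le hη'0.le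
      have hsub : innerCollar n Ω r ⊆ Ω := fun x hx => hx.1
      calc volume (innerCollar n Ω r) ≤ volume Ω := measure_mono hsub
        _ ≤ K := le_max_right _ _
        _ = K * ENNReal.ofReal (min (r ^ η') 1) := by rw [hmin]; simp
  have hmain : Lfun n s₀ Ω Ωᶜ < ⊤ :=
    mainBound n Ω hΩo hΩb hs0 hη'0 hη'1 hη's K hK hbd'
  refine ⟨hmain, fun E _ => ?_⟩
  exact lt_of_le_of_lt (Lfun_mono n s₀ inter_subset_right inter_subset_right) hmain
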